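/- arXiv:math/9905189 — 2 statements merged into one kernel-verified Lean document; each statement's English description precedes it below -/
import Mathlib

section
/- For each n ≥ 0, the nth level z-measure sums to 1 over partitions of n: ∑_{λ ⊢ n} (∏_{b∈λ} (c(b)+z)(c(b)+z')) / (zz')_n · (dim λ)² / n! = 1, where z, z' are complex parameters with z' = conj(z) and z not an integer. -/
/-- `p` is a partition of `n`: weakly decreasing, supported on `{0,…,n-1}`, summing to `n`. -/
def IsPartitionOf (n : ℕ) (p : ℕ → ℕ) : Prop :=
  Antitone p ∧ (∀ i, n ≤ i → p i = 0) ∧ ∑ i ∈ Finset.range n, p i = n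

/-- The cells (boxes) of the Young diagram of `p`, in 0-based coordinates. -/
def cells (n : ℕ) (p : ℕ → ℕ) : Finset (ℕ × ℕ) :=
  (Finset.range n ×ˢ Finset.range n).filter (fun c => c.2 < p c.1)

/-- The conjugate (transposed) partition. -/
def conjPart (n : ℕ) (p : ℕ → ℕ) (j : ℕ) : ℕ :=
  ((Finset.range n).filter (fun i => j < p i)).card

/-- The hook length of the box `c = (i, j)` of the diagram of `p`. -/
def hook (n : ℕ) (p : ℕ → ℕ) (c : ℕ × ℕ) : ℕ :=
  p c.1 + conjPart n p c.2 - c.1 - c.2 - 1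

/-- `T` is a standard Young tableau of shape `p ⊢ n`: a bijective filling of the cells
by `1,…,n`, strictly increasing along rows and columns (and `0` outside the diagram). -/
def IsSYT (n : ℕ) (p : ℕ → ℕ) (T : ℕ × ℕ → ℕ) : Prop :=
  (∀ c, c ∉ cells n p → T c = 0) ∧
  Set.BijOn T (cells n p : Set (ℕ × ℕ)) (Set.Icc 1 n) ∧
  (∀ i j, (i, j + 1) ∈ cells n p → T (i, j) < T (i, j + 1)) ∧
  (∀ i j, (i + 1, j) ∈ cells n p → T (i, j) < T (i + 1, j))

/-- `dim λ`: the number of standard Young tableaux of shape `p ⊢ n`. -/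
noncomputable def dimSYT (n : ℕ) (p : ℕ → ℕ) : ℕ :=
  Set.ncard {T : ℕ × ℕ → ℕ | IsSYT n p T}

open Finset Function

def addBox (p : ℕ → ℕ) (b : ℕ) : ℕ → ℕ := fun j => if j = b then p j + 1 else p j
def remBox (p : ℕ → ℕ) (r : ℕ) : ℕ → ℕ := fun j => if j = r then p j - 1 else p j
def addRows (n : ℕ) (p : ℕ → ℕ) : Finset ℕ :=
  (Finset.range (n+1)).filter (fun i => i = 0 ∨ p i < p (i-1))
def remRows (n : ℕ) (p : ℕ → ℕ) : Finset ℕ :=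
  (Finset.range (n+1)).filter (fun i => p (i+1) < p i)

variable {n r b : ℕ} {p P : ℕ → ℕ}

lemma addBox_self (p : ℕ → ℕ) (b : ℕ) : addBox p b b = p b + 1 := by simp [addBox]
lemma addBox_ne (p : ℕ → ℕ) {b j : ℕ} (h : j ≠ b) : addBox p b j = p j := by simp [addBox, h]
lemma remBox_self (p : ℕ → ℕ) (r : ℕ) : remBox p r r = p r - 1 := by simp [remBox]
lemma remBox_ne (p : ℕ → ℕ) {r j : ℕ} (h : j ≠ r) : remBox p r j = p j := by simp [remBox, h]

lemma part_le (hp : IsPartitionOf n p) (i : ℕ) : p i ≤ n := by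
  rcases Nat.eq_zero_or_pos n with h | h
  · subst h; exact le_of_eq (hp.2.1 i (Nat.zero_le i))
  · calc p i ≤ p 0 := hp.1 (Nat.zero_le i)
      _ ≤ ∑ j ∈ Finset.range n, p j :=
        Finset.single_le_sum (fun j _ => Nat.zero_le _) (Finset.mem_range.2 h)
      _ = n := hp.2.2

lemma part_pos_lt (hp : IsPartitionOf n p) {i : ℕ} (h : 0 < p i) : i < n := by
  by_contra hc
  push_neg at hc
  have := hp.2.1 i hc
  omega

lemma mem_addRows : b ∈ addRows n p ↔ b < n+1 ∧ (b = 0 ∨ p b < p (b-1)) := by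
  simp [addRows, Finset.mem_filter, Finset.mem_range]

lemma mem_remRows : r ∈ remRows n p ↔ r < n+1 ∧ p (r+1) < p r := by
  simp [remRows, Finset.mem_filter, Finset.mem_range]

lemma mem_cells {c : ℕ × ℕ} : c ∈ cells n p ↔ c.1 < n ∧ c.2 < n ∧ c.2 < p c.1 := by
  simp [cells, Finset.mem_filter, and_assoc]

lemma mem_cells' {i j : ℕ} : (i, j) ∈ cells n p ↔ i < n ∧ j < n ∧ j < p i := by
  rw [mem_cells]

lemma cells_bound (hp : IsPartitionOf n p) {N : ℕ} (hN : n ≤ N) : cells N p = cells n p := by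
  ext c
  simp only [mem_cells]
  constructor
  · rintro ⟨h1, h2, h3⟩
    have hpos : c.1 < n := part_pos_lt hp (by omega)
    have := part_le hp c.1
    exact ⟨hpos, by omega, h3⟩
  · rintro ⟨h1, h2, h3⟩
    exact ⟨by omega, by omega, h3⟩

lemma isPartitionOf_addBox (hp : IsPartitionOf n p) (hb : b ∈ addRows n p) :
    IsPartitionOf (n+1) (addBox p b) := by
  obtain ⟨hb1, hb2⟩ := mem_addRows.1 hb
  refine ⟨antitone_nat_of_succ_le ?_, ?_, ?_⟩
  · intro i
    have han : p (i+1) ≤ p i := hp.1 (show i ≤ i+1 by omega)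
    by_cases h1 : i + 1 = b
    · have hb0 : b ≠ 0 := by omega
      have h3 : p b < p (b-1) := hb2.resolve_left hb0
      have hbi : b - 1 = i := by omega
      rw [hbi] at h3
      rw [addBox_ne p (show i ≠ b by omega), h1, addBox_self]
      omega
    · by_cases h2 : i = b
      · subst h2
        rw [addBox_ne p h1, addBox_self]
        omega
      · rw [addBox_ne p h1, addBox_ne p h2]
        exact han
  · intro i hi
    rw [addBox_ne p (show i ≠ b by omega)]
    exact hp.2.1 i (by omega)
  · have h1 : ∀ j ∈ Finset.range (n+1), addBox p b j = p j + (if j = b then 1 else 0) := by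
      intro j _
      by_cases h : j = b
      · rw [h, addBox_self]; simp
      · rw [addBox_ne p h]; simp [h]
    rw [Finset.sum_congr rfl h1, Finset.sum_add_distrib]
    rw [Finset.sum_ite_eq' (Finset.range (n+1)) b (fun _ => 1)]
    rw [Finset.sum_range_succ, hp.2.2, hp.2.1 n le_rfl]
    simp [Finset.mem_range.2 hb1]

lemma all_one (hp : IsPartitionOf (n+1) p) (h : 0 < p n) : ∀ i < n+1, p i = 1 := by
  have h1 : ∀ i ∈ Finset.range (n+1), 1 ≤ p i := by
    intro i hi
    have := hp.1 (show i ≤ n by exact Nat.lt_succ_iff.1 (Finset.mem_range.1 hi))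
    omega
  by_contra hc
  push_neg at hc
  obtain ⟨i, hi, hne⟩ := hc
  have h2 : 1 < p i := by have := h1 i (Finset.mem_range.2 hi); omega
  have h3 : ∑ j ∈ Finset.range (n+1), (1:ℕ) < ∑ j ∈ Finset.range (n+1), p j :=
    Finset.sum_lt_sum h1 ⟨i, Finset.mem_range.2 hi, h2⟩
  rw [hp.2.2] at h3
  simp at h3

lemma remBox_zero (hp : IsPartitionOf (n+1) p) (hr : r ∈ remRows (n+1) p) :
    ∀ j, n ≤ j → remBox p r j = 0 := by
  obtain ⟨hr1, hr2⟩ := mem_remRows.1 hr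
  have hrpos : 0 < p r := by omega
  have hrn : r < n + 1 := part_pos_lt hp hrpos
  intro j hj
  by_cases hjr : j = r
  · subst hjr
    have hjn : j = n := by omega
    rw [remBox_self]
    have := all_one hp (hjn ▸ hrpos) j (by omega)
    omega
  · rw [remBox_ne p hjr]
    rcases Nat.lt_or_ge j (n+1) with hj1 | hj1
    · have hjn : j = n := by omega
      by_contra hc
      have hpos : 0 < p n := by rw [← hjn]; omega
      have ha := all_one hp hpos
      have har : p r = 1 := ha r hrn
      have har1 : p (r+1) = 0 := by omega
      rcases Nat.lt_or_ge (r+1) (n+1) with h | h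
      · have := ha (r+1) h; omega
      · have : r = n := by omega
        omega
    · exact hp.2.1 j hj1

lemma isPartitionOf_remBox (hp : IsPartitionOf (n+1) p) (hr : r ∈ remRows (n+1) p) :
    IsPartitionOf n (remBox p r) := by
  obtain ⟨hr1, hr2⟩ := mem_remRows.1 hr
  have hrpos : 0 < p r := by omega
  have hrn : r < n + 1 := part_pos_lt hp hrpos
  refine ⟨antitone_nat_of_succ_le ?_, remBox_zero hp hr, ?_⟩
  · intro i
    have han : p (i+1) ≤ p i := hp.1 (show i ≤ i+1 by omega)
    by_cases h1 : i = r
    · rw [remBox_ne p (show i+1 ≠ r by omega), h1, remBox_self]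
      omega
    · by_cases h2 : i + 1 = r
      · rw [h2, remBox_self, remBox_ne p h1]
        have : p r ≤ p i := h2 ▸ han
        omega
      · rw [remBox_ne p h2, remBox_ne p h1]
        exact han
  · have h1 : ∀ j ∈ Finset.range (n+1), p j = remBox p r j + (if j = r then 1 else 0) := by
      intro j _
      by_cases h : j = r
      · rw [h, remBox_self]; simp; omega
      · rw [remBox_ne p h]; simp [h]
    have h2 : ∑ j ∈ Finset.range (n+1), p j
        = (∑ j ∈ Finset.range (n+1), remBox p r j) + 1 := by
      rw [Finset.sum_congr rfl h1, Finset.sum_add_distrib,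
        Finset.sum_ite_eq' (Finset.range (n+1)) r (fun _ => 1)]
      simp [Finset.mem_range.2 hrn]
    rw [hp.2.2] at h2
    have h3 : ∑ j ∈ Finset.range (n+1), remBox p r j
        = (∑ j ∈ Finset.range n, remBox p r j) + remBox p r n := Finset.sum_range_succ _ _
    have h4 : remBox p r n = 0 := remBox_zero hp hr n le_rfl
    omega

lemma remBox_addBox (p : ℕ → ℕ) (b : ℕ) : remBox (addBox p b) b = p := by
  funext j
  by_cases h : j = b
  · subst h; rw [remBox_self, addBox_self]; omega
  · rw [remBox_ne _ h, addBox_ne _ h]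

lemma addBox_remBox (h : 0 < p r) : addBox (remBox p r) r = p := by
  funext j
  by_cases hj : j = r
  · subst hj; rw [addBox_self, remBox_self]; omega
  · rw [addBox_ne _ hj, remBox_ne _ hj]

def compat (p : ℕ → ℕ) (r b : ℕ) : Prop := b ≠ r ∧ ¬(b = r + 1 ∧ p r = p b + 1)

instance (p : ℕ → ℕ) (r b : ℕ) : Decidable (compat p r b) := by
  unfold compat; infer_instance

lemma remRows_addBox (hp : IsPartitionOf n p) (hb : b ∈ addRows n p) :
    remRows (n+1) (addBox p b)
      = insert b ((remRows n p).filter (fun r => compat p r b)) := by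
  obtain ⟨hb1, hb2⟩ := mem_addRows.1 hb
  ext i
  simp only [mem_remRows, Finset.mem_insert, Finset.mem_filter]
  simp only [compat]
  by_cases h1 : i = b
  · constructor
    · intro _; exact Or.inl h1
    · intro _
      refine ⟨by omega, ?_⟩
      rw [h1, addBox_ne p (by omega : b+1 ≠ b), addBox_self]
      have := hp.1 (show b ≤ b+1 by omega)
      omega
  · by_cases h2 : i + 1 = b
    · subst h2
      rw [addBox_ne p h1, addBox_self]
      have hin : i < n := by omega
      constructor
      · rintro ⟨-, hlt⟩
        right
        exact ⟨⟨by omega, by omega⟩, by omega, by rintro ⟨-, he⟩; omega⟩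
      · rintro (h | ⟨⟨hi, hlt⟩, hne, hcon⟩)
        · omega
        · refine ⟨by omega, ?_⟩
          have : ¬ (p i = p (i+1) + 1) := fun he => hcon ⟨rfl, he⟩
          omega
    · rw [addBox_ne p h1, addBox_ne p h2]
      constructor
      · rintro ⟨hi, hlt⟩
        right
        have := part_pos_lt hp (show 0 < p i by omega)
        exact ⟨⟨by omega, hlt⟩, by omega, by rintro ⟨he, -⟩; exact h2 he.symm⟩
      · rintro (h | ⟨⟨hi, hlt⟩, -, -⟩)
        · exact absurd h h1
        · exact ⟨by omega, hlt⟩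

lemma addRows_remBox (hp : IsPartitionOf (n+1) p) (hr : r ∈ remRows (n+1) p) :
    addRows n (remBox p r)
      = insert r ((addRows (n+1) p).filter (fun b => compat p r b)) := by
  obtain ⟨hr1, hr2⟩ := mem_remRows.1 hr
  have hrpos : 0 < p r := by omega
  have hrn : r < n+1 := part_pos_lt hp hrpos
  have hmu := isPartitionOf_remBox hp hr
  ext i
  simp only [mem_addRows, Finset.mem_insert, Finset.mem_filter]
  simp only [compat]
  by_cases h1 : i = r
  · constructor
    · intro _; exact Or.inl h1
    · intro _
      refine ⟨by omega, ?_⟩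
      rcases Nat.eq_zero_or_pos i with h0 | h0
      · exact Or.inl h0
      · right
        rw [h1, remBox_self, remBox_ne p (show r - 1 ≠ r by omega)]
        have := hp.1 (show r - 1 ≤ r by omega)
        omega
  · by_cases h2 : i = r + 1
    · subst h2
      rw [remBox_ne p (by omega : r+1 ≠ r), Nat.add_sub_cancel, remBox_self]
      constructor
      · rintro ⟨hb, (h0 | hlt)⟩
        · exact absurd h0 (by omega)
        · right
          refine ⟨⟨by omega, Or.inr ?_⟩, by omega, ?_⟩
          · omega
          · rintro ⟨-, he⟩; omega
      · rintro (h | ⟨⟨hb, hor⟩, hne, hcon⟩)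
        · exact absurd h (by omega)
        · have hlt : p (r+1) < p r - 1 := by
            have : ¬ (p r = p (r+1) + 1) := fun he => hcon ⟨rfl, he⟩
            omega
          refine ⟨?_, Or.inr hlt⟩
          have : r < n := part_pos_lt hmu (p := remBox p r) (by rw [remBox_self]; omega)
          omega
    · rw [remBox_ne p h1]
      constructor
      · rintro ⟨hb, (h0 | hlt)⟩
        · exact Or.inr ⟨⟨by omega, Or.inl h0⟩, h1, by rintro ⟨he, -⟩; exact h2 he⟩
        · rw [remBox_ne p (show i - 1 ≠ r by omega)] at hlt
          exact Or.inr ⟨⟨by omega, Or.inr hlt⟩, h1, by rintro ⟨he, -⟩; exact h2 he⟩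
      · rintro (h | ⟨⟨hb, hor⟩, -, -⟩)
        · exact absurd h h1
        · rcases hor with h0 | hlt
          · exact ⟨by omega, Or.inl h0⟩
          · refine ⟨?_, Or.inr ?_⟩
            · have : i - 1 < n := part_pos_lt hmu
                (by rw [remBox_ne p (show i - 1 ≠ r by omega)]; omega)
              omega
            · rw [remBox_ne p (show i - 1 ≠ r by omega)]
              exact hlt

lemma r_mem_addRows (hp : IsPartitionOf (n+1) p) (hr : r ∈ remRows (n+1) p) :
    r ∈ addRows n (remBox p r) := by
  obtain ⟨hr1, hr2⟩ := mem_remRows.1 hr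
  have hrn : r < n+1 := part_pos_lt hp (by omega)
  refine mem_addRows.2 ⟨by omega, ?_⟩
  rcases Nat.eq_zero_or_pos r with h0 | h0
  · exact Or.inl h0
  · right
    rw [remBox_self, remBox_ne p (show r - 1 ≠ r by omega)]
    have := hp.1 (show r - 1 ≤ r by omega)
    omega

lemma b_mem_remRows (hp : IsPartitionOf n p) (hb : b ∈ addRows n p) :
    b ∈ remRows (n+1) (addBox p b) := by
  obtain ⟨hb1, -⟩ := mem_addRows.1 hb
  refine mem_remRows.2 ⟨by omega, ?_⟩
  rw [addBox_ne p (by omega : b+1 ≠ b), addBox_self]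
  have := hp.1 (show b ≤ b+1 by omega)
  omega

lemma addRows_eq (hp : IsPartitionOf n p) :
    addRows n p = insert 0 ((remRows n p).image (· + 1)) := by
  ext i
  simp only [mem_addRows, Finset.mem_insert, Finset.mem_image, mem_remRows]
  constructor
  · rintro ⟨hi, h0 | hlt⟩
    · exact Or.inl h0
    · have hi0 : i ≠ 0 := by
        intro h
        rw [h] at hlt
        simp at hlt
      right
      refine ⟨i-1, ⟨by omega, ?_⟩, by omega⟩
      rw [show i - 1 + 1 = i by omega]
      exact hlt
  · rintro (rfl | ⟨j, ⟨hj, hlt⟩, rfl⟩)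
    · exact ⟨by omega, Or.inl rfl⟩
    · have := part_pos_lt hp (show 0 < p j by omega)
      refine ⟨by omega, Or.inr ?_⟩
      rw [Nat.add_sub_cancel]
      exact hlt

lemma gauss (n : ℕ) : 2 * (∑ i ∈ Finset.range n, i) + n = n^2 := by
  have h := Finset.sum_range_id_mul_two n
  have h2 : n * (n-1) + n = n^2 := by
    cases n with
    | zero => simp
    | succ m => rw [Nat.add_sub_cancel]; ring
  calc 2 * (∑ i ∈ Finset.range n, i) + n = (∑ i ∈ Finset.range n, i) * 2 + n := by ring
    _ = n * (n-1) + n := by rw [h]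
    _ = n^2 := h2

lemma cells_addBox (hp : IsPartitionOf n p) (hb : b ∈ addRows n p) :
    cells (n+1) (addBox p b) = insert (b, p b) (cells n p) := by
  obtain ⟨hb1, hb2⟩ := mem_addRows.1 hb
  ext ⟨i, j⟩
  simp only [mem_cells, Finset.mem_insert, Prod.mk.injEq]
  by_cases h : i = b
  · subst h
    rw [addBox_self]
    constructor
    · rintro ⟨-, h2, h3⟩
      rcases Nat.lt_or_ge j (p i) with h4 | h4
      · right
        have hpos := part_pos_lt hp (show 0 < p i by omega)
        have hle := part_le hp i
        exact ⟨by omega, by omega, h4⟩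
      · exact Or.inl ⟨rfl, by omega⟩
    · rintro (⟨-, rfl⟩ | ⟨h1', h2', h3'⟩)
      · have := part_le hp i
        exact ⟨by omega, by omega, by omega⟩
      · exact ⟨by omega, by omega, by omega⟩
  · rw [addBox_ne p h]
    constructor
    · rintro ⟨h1', h2', h3'⟩
      right
      have hpos := part_pos_lt hp (show 0 < p i by omega)
      have hle := part_le hp i
      exact ⟨by omega, by omega, h3'⟩
    · rintro (⟨hib, -⟩ | ⟨h1', h2', h3'⟩)
      · exact absurd hib h
      · exact ⟨by omega, by omega, h3'⟩

lemma newcell_not_mem : (b, p b) ∉ cells n p := by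
  intro h
  exact absurd (mem_cells.1 h).2.2 (lt_irrefl _)

lemma sum_w (z z' : ℂ) (hp : IsPartitionOf n p) :
    ∑ b ∈ addRows n p, (((p b : ℂ) - b + z) * ((p b : ℂ) - b + z'))
      = (∑ r ∈ remRows n p, (((p r : ℂ) - 1 - r + z) * ((p r : ℂ) - 1 - r + z')))
        + (2*n + z*z') := by
  have h0 : (0:ℕ) ∉ (remRows n p).image (· + 1) := by simp
  rw [addRows_eq hp, Finset.sum_insert h0,
    Finset.sum_image (by intro x _ y _ h; simp only at h; omega)]
  have key : ∑ r ∈ remRows n p,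
      (((((p (r+1) : ℕ):ℂ)) - ((r+1:ℕ):ℂ) + z) * ((((p (r+1) : ℕ):ℂ)) - ((r+1:ℕ):ℂ) + z')
      - (((p r : ℂ) - 1 - r + z) * ((p r : ℂ) - 1 - r + z')))
      = 2*n + z*z' - (((p 0 : ℂ) - (0:ℕ) + z) * ((p 0 : ℂ) - (0:ℕ) + z')) := by
    have hsub : remRows n p ⊆ Finset.range n := by
      intro x hx
      obtain ⟨h1, h2⟩ := mem_remRows.1 hx
      exact Finset.mem_range.2 (part_pos_lt hp (by omega))
    rw [Finset.sum_subset hsub (by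
      intro x hx hnx
      have hx' := Finset.mem_range.1 hx
      have hpx : p (x+1) = p x := by
        have hle := hp.1 (show x ≤ x+1 by omega)
        have : ¬ (p (x+1) < p x) := fun h => hnx (mem_remRows.2 ⟨by omega, h⟩)
        omega
      rw [hpx]
      push_cast
      ring)]
    have split : ∀ i : ℕ,
        (((p (i+1) : ℕ):ℂ) - ((i+1:ℕ):ℂ) + z) * (((p (i+1) : ℕ):ℂ) - ((i+1:ℕ):ℂ) + z')
          - (((p i : ℂ) - 1 - i + z) * ((p i : ℂ) - 1 - i + z'))
        = ((((p (i+1) : ℕ):ℂ) - ((i+1:ℕ):ℂ) + z) * (((p (i+1) : ℕ):ℂ) - ((i+1:ℕ):ℂ) + z')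
             - (((p i : ℂ) - i + z) * ((p i : ℂ) - i + z')))
          + (2 * ((p i : ℂ)) - 2 * ((i:ℕ):ℂ) + (z + z' - 1)) := by
      intro i; push_cast; ring
    rw [Finset.sum_congr rfl (fun i _ => split i), Finset.sum_add_distrib]
    rw [Finset.sum_range_sub (f := fun i => (((p i : ℕ):ℂ) - ((i:ℕ):ℂ) + z) * (((p i : ℕ):ℂ) - ((i:ℕ):ℂ) + z'))]
    have hsp : ∑ i ∈ Finset.range n, ((p i : ℕ):ℂ) = (n:ℂ) := by
      rw [← Nat.cast_sum, hp.2.2]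
    have hS : 2 * (∑ i ∈ Finset.range n, ((i:ℕ):ℂ)) + (n:ℂ) = (n:ℂ)^2 := by
      have := gauss n
      have h2 : ((2 * (∑ i ∈ Finset.range n, i) + n : ℕ) : ℂ) = ((n^2 : ℕ):ℂ) := by
        rw [this]
      push_cast at h2
      exact h2
    have e2 : ∑ i ∈ Finset.range n, (2 * ((p i : ℂ)) - 2 * ((i:ℕ):ℂ) + (z + z' - 1))
        = 2 * (n:ℂ) - 2 * (∑ i ∈ Finset.range n, ((i:ℕ):ℂ)) + (n:ℂ) * (z + z' - 1) := by
      rw [Finset.sum_add_distrib, Finset.sum_sub_distrib, ← Finset.mul_sum, ← Finset.mul_sum,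
        hsp, Finset.sum_const, Finset.card_range]
      push_cast
      ring
    rw [e2, hp.2.1 n le_rfl]
    push_cast
    linear_combination -hS
  rw [Finset.sum_sub_distrib] at key
  push_cast at key ⊢
  linear_combination key

lemma syt_le {T : ℕ × ℕ → ℕ} (hT : IsSYT n p T) : ∀ c, T c ≤ n := by
  intro c
  by_cases h : c ∈ cells n p
  · exact (hT.2.1.1 (Finset.mem_coe.2 h)).2
  · rw [hT.1 c h]; exact Nat.zero_le n

lemma syt_finite (n : ℕ) (p : ℕ → ℕ) : {T : ℕ × ℕ → ℕ | IsSYT n p T}.Finite := by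
  classical
  have hinj : Set.InjOn
      (fun (T : ℕ × ℕ → ℕ) => (fun c : {x // x ∈ cells n p} => (⟨min (T c.1) n, by omega⟩ : Fin (n+1))))
      {T : ℕ × ℕ → ℕ | IsSYT n p T} := by
    intro T₁ h₁ T₂ h₂ he
    funext c
    by_cases hc : c ∈ cells n p
    · have := congrFun he ⟨c, hc⟩
      simp only [Fin.mk.injEq] at this
      have e₁ := syt_le h₁ c
      have e₂ := syt_le h₂ c
      omega
    · rw [h₁.1 c hc, h₂.1 c hc]
  exact Set.Finite.of_finite_image (Set.toFinite _) hinj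

lemma dim_zero (hp : IsPartitionOf 0 p) : dimSYT 0 p = 1 := by
  have hc : cells 0 p = ∅ := by
    ext c; simp [mem_cells]
  have hset : {T : ℕ × ℕ → ℕ | IsSYT 0 p T} = {fun _ => 0} := by
    ext T
    simp only [Set.mem_setOf_eq, Set.mem_singleton_iff, IsSYT, hc]
    constructor
    · rintro ⟨h0, -, -, -⟩
      funext c
      exact h0 c (by simp)
    · rintro rfl
      refine ⟨fun c _ => rfl, ?_, ?_, ?_⟩
      · rw [show (Set.Icc 1 0 : Set ℕ) = ∅ by simp [Set.Icc_eq_empty]]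
        simp only [Finset.coe_empty]
        exact Set.bijOn_empty _
      · intro i j h; simp at h
      · intro i j h; simp at h
  rw [dimSYT, hset, Set.ncard_singleton]

lemma corner_mem_cells (hP : IsPartitionOf (n+1) P) (hr : r ∈ remRows (n+1) P) :
    (r, P r - 1) ∈ cells (n+1) P := by
  obtain ⟨-, h2⟩ := mem_remRows.1 hr
  have h4 := part_pos_lt hP (show 0 < P r by omega)
  have h5 := part_le hP r
  exact mem_cells'.2 ⟨h4, by omega, by omega⟩

lemma cells_remBox (hP : IsPartitionOf (n+1) P) (hr : r ∈ remRows (n+1) P) :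
    cells n (remBox P r) = (cells (n+1) P).erase (r, P r - 1) := by
  have hmu := isPartitionOf_remBox hP hr
  obtain ⟨-, hr2⟩ := mem_remRows.1 hr
  rw [← cells_bound hmu (Nat.le_succ n)]
  ext ⟨i, j⟩
  rw [Finset.mem_erase]
  simp only [mem_cells, Ne, Prod.mk.injEq, not_and]
  by_cases hir : i = r
  · subst hir
    rw [remBox_self]
    constructor
    · rintro ⟨h1, h2, h3⟩
      exact ⟨fun _ h => by omega, h1, h2, by omega⟩
    · rintro ⟨hne, h1, h2, h3⟩
      have : j ≠ P i - 1 := fun h => hne rfl h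
      exact ⟨h1, h2, by omega⟩
  · rw [remBox_ne P hir]
    constructor
    · rintro ⟨h1, h2, h3⟩
      exact ⟨fun h => absurd h hir, h1, h2, h3⟩
    · rintro ⟨-, h1, h2, h3⟩
      exact ⟨h1, h2, h3⟩

lemma syt_remove (hP : IsPartitionOf (n+1) P) (hr : r ∈ remRows (n+1) P)
    {T : ℕ × ℕ → ℕ} (hT : IsSYT (n+1) P T) (hc : T (r, P r - 1) = n+1) :
    IsSYT n (remBox P r) (Function.update T (r, P r - 1) 0) := by
  obtain ⟨h0, hbij, hrow, hcol⟩ := hT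
  obtain ⟨-, hr2⟩ := mem_remRows.1 hr
  have hcell := corner_mem_cells hP hr
  have hmem : ∀ c : ℕ × ℕ, c ∈ cells n (remBox P r) ↔ (c ≠ (r, P r - 1) ∧ c ∈ cells (n+1) P) := by
    intro c; rw [cells_remBox hP hr]; exact Finset.mem_erase
  refine ⟨?_, ⟨?_, ?_, ?_⟩, ?_, ?_⟩
  · intro c hcn
    by_cases h : c = (r, P r - 1)
    · rw [h, Function.update_self]
    · rw [Function.update_of_ne h]
      refine h0 c (fun hmem' => hcn ((hmem c).2 ⟨h, hmem'⟩))
  · intro c hcn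
    obtain ⟨hne, hcP⟩ := (hmem c).1 (Finset.mem_coe.1 hcn)
    rw [Function.update_of_ne hne]
    have h1 := hbij.1 (Finset.mem_coe.2 hcP)
    simp only [Set.mem_Icc] at h1 ⊢
    have h2 : T c ≠ n + 1 := by
      intro he
      exact hne (hbij.2.1 (Finset.mem_coe.2 hcP) (Finset.mem_coe.2 hcell) (by rw [he, hc]))
    omega
  · intro a ha b hb hab
    have ha' := (hmem a).1 (Finset.mem_coe.1 ha)
    have hb' := (hmem b).1 (Finset.mem_coe.1 hb)
    rw [Function.update_of_ne ha'.1, Function.update_of_ne hb'.1] at hab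
    exact hbij.2.1 (Finset.mem_coe.2 ha'.2) (Finset.mem_coe.2 hb'.2) hab
  · intro y hy
    simp only [Set.mem_Icc] at hy
    have hy' : y ∈ Set.Icc 1 (n+1) := Set.mem_Icc.2 ⟨hy.1, by omega⟩
    obtain ⟨c, hcP, hTc⟩ := hbij.2.2 hy'
    have hne : c ≠ (r, P r - 1) := by
      intro h
      rw [h, hc] at hTc
      omega
    refine ⟨c, Finset.mem_coe.2 ((hmem c).2 ⟨hne, Finset.mem_coe.1 hcP⟩), ?_⟩
    rw [Function.update_of_ne hne]; exact hTc
  · intro i j hm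
    obtain ⟨hne1, hP1⟩ := (hmem _).1 hm
    have hne0 : (i, j) ≠ (r, P r - 1) := by
      intro h
      rw [Prod.mk.injEq] at h
      obtain ⟨hi, hj⟩ := h
      subst hi
      have := (mem_cells'.1 hP1).2.2
      omega
    rw [Function.update_of_ne hne0, Function.update_of_ne hne1]
    exact hrow i j hP1
  · intro i j hm
    obtain ⟨hne1, hP1⟩ := (hmem _).1 hm
    have hne0 : (i, j) ≠ (r, P r - 1) := by
      intro h
      rw [Prod.mk.injEq] at h
      obtain ⟨hi, hj⟩ := h
      subst hi
      have := (mem_cells'.1 hP1).2.2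
      omega
    rw [Function.update_of_ne hne0, Function.update_of_ne hne1]
    exact hcol i j hP1

lemma syt_insert (hP : IsPartitionOf (n+1) P) (hr : r ∈ remRows (n+1) P)
    {T' : ℕ × ℕ → ℕ} (hT' : IsSYT n (remBox P r) T') :
    IsSYT (n+1) P (Function.update T' (r, P r - 1) (n+1)) := by
  obtain ⟨h0, hbij, hrow, hcol⟩ := hT'
  obtain ⟨-, hr2⟩ := mem_remRows.1 hr
  have hcell := corner_mem_cells hP hr
  have hval : ∀ c, T' c ≤ n := syt_le ⟨h0, hbij, hrow, hcol⟩
  have hmem : ∀ c : ℕ × ℕ, c ∈ cells n (remBox P r) ↔ (c ≠ (r, P r - 1) ∧ c ∈ cells (n+1) P) := by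
    intro c; rw [cells_remBox hP hr]; exact Finset.mem_erase
  refine ⟨?_, ⟨?_, ?_, ?_⟩, ?_, ?_⟩
  · intro c hcn
    have hne : c ≠ (r, P r - 1) := fun h => hcn (h ▸ hcell)
    rw [Function.update_of_ne hne]
    exact h0 c (fun hm => hcn ((hmem c).1 hm).2)
  · intro c hcn
    by_cases h : c = (r, P r - 1)
    · rw [h, Function.update_self]
      exact Set.mem_Icc.2 ⟨by omega, le_rfl⟩
    · rw [Function.update_of_ne h]
      have hcμ : c ∈ cells n (remBox P r) := (hmem c).2 ⟨h, Finset.mem_coe.1 hcn⟩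
      have := Set.mem_Icc.1 (hbij.1 (Finset.mem_coe.2 hcμ))
      exact Set.mem_Icc.2 ⟨this.1, by omega⟩
  · intro a ha b hb hab
    by_cases h1 : a = (r, P r - 1) <;> by_cases h2 : b = (r, P r - 1)
    · rw [h1, h2]
    · rw [h1, Function.update_self, Function.update_of_ne h2] at hab
      have := hval b
      omega
    · rw [h2, Function.update_self, Function.update_of_ne h1] at hab
      have := hval a
      omega
    · rw [Function.update_of_ne h1, Function.update_of_ne h2] at hab
      have haμ : a ∈ cells n (remBox P r) := (hmem a).2 ⟨h1, Finset.mem_coe.1 ha⟩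
      have hbμ : b ∈ cells n (remBox P r) := (hmem b).2 ⟨h2, Finset.mem_coe.1 hb⟩
      exact hbij.2.1 (Finset.mem_coe.2 haμ) (Finset.mem_coe.2 hbμ) hab
  · intro y hy
    simp only [Set.mem_Icc] at hy
    by_cases h : y = n + 1
    · exact ⟨(r, P r - 1), Finset.mem_coe.2 hcell, by rw [Function.update_self, h]⟩
    · obtain ⟨c, hcμ, hTc⟩ := hbij.2.2 (Set.mem_Icc.2 ⟨hy.1, by omega⟩)
      have hne := ((hmem c).1 (Finset.mem_coe.1 hcμ)).1
      refine ⟨c, Finset.mem_coe.2 ((hmem c).1 (Finset.mem_coe.1 hcμ)).2, ?_⟩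
      rw [Function.update_of_ne hne]; exact hTc
  · intro i j hm
    by_cases h : (i, j+1) = (r, P r - 1)
    · rw [h, Function.update_self]
      have hne : (i, j) ≠ (r, P r - 1) := by
        intro h'
        rw [Prod.mk.injEq] at h h'
        omega
      rw [Function.update_of_ne hne]
      have := hval (i, j)
      omega
    · have hmμ : (i, j+1) ∈ cells n (remBox P r) := (hmem _).2 ⟨h, hm⟩
      have hne : (i, j) ≠ (r, P r - 1) := by
        intro h'
        rw [Prod.mk.injEq] at h'
        obtain ⟨hi, hj⟩ := h'
        subst hi
        have := (mem_cells'.1 hmμ).2.2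
        rw [remBox_self] at this
        omega
      rw [Function.update_of_ne hne, Function.update_of_ne h]
      exact hrow i j hmμ
  · intro i j hm
    by_cases h : (i+1, j) = (r, P r - 1)
    · rw [h, Function.update_self]
      have hne : (i, j) ≠ (r, P r - 1) := by
        intro h'
        rw [Prod.mk.injEq] at h h'
        omega
      rw [Function.update_of_ne hne]
      have := hval (i, j)
      omega
    · have hmμ : (i+1, j) ∈ cells n (remBox P r) := (hmem _).2 ⟨h, hm⟩
      have hne : (i, j) ≠ (r, P r - 1) := by
        intro h'
        rw [Prod.mk.injEq] at h'
        obtain ⟨hi, hj⟩ := h'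
        subst hi
        have := (mem_cells'.1 hmμ).2.2
        rw [remBox_ne P (by omega)] at this
        omega
      rw [Function.update_of_ne hne, Function.update_of_ne h]
      exact hcol i j hmμ

lemma syt_top_cell (hP : IsPartitionOf (n+1) P) {T : ℕ × ℕ → ℕ} (hT : IsSYT (n+1) P T) :
    ∃ r ∈ remRows (n+1) P, T (r, P r - 1) = n + 1 := by
  obtain ⟨h0, hbij, hrow, hcol⟩ := hT
  obtain ⟨⟨i, j⟩, hc, hTc⟩ := hbij.2.2 (Set.mem_Icc.2 ⟨by omega, le_rfl⟩ : (n+1) ∈ Set.Icc 1 (n+1))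
  have hcc := mem_cells'.1 (Finset.mem_coe.1 hc)
  have h1 : ¬ ((i, j+1) ∈ cells (n+1) P) := by
    intro h
    have hlt := hrow i j h
    have hle := (Set.mem_Icc.1 (hbij.1 (Finset.mem_coe.2 h))).2
    rw [hTc] at hlt
    omega
  have h2 : ¬ ((i+1, j) ∈ cells (n+1) P) := by
    intro h
    have hlt := hcol i j h
    have hle := (Set.mem_Icc.1 (hbij.1 (Finset.mem_coe.2 h))).2
    rw [hTc] at hlt
    omega
  rw [mem_cells', not_and, not_and] at h1 h2
  have hPle := part_le hP i
  have hj1 : P i ≤ j + 1 := by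
    rcases Nat.lt_or_ge (j+1) (n+1) with h | h
    · have := h1 hcc.1 h
      omega
    · omega
  have hj2 : P (i+1) ≤ j := by
    rcases Nat.lt_or_ge (i+1) (n+1) with h | h
    · have := h2 h hcc.2.1
      omega
    · have := hP.2.1 (i+1) (by omega)
      omega
  refine ⟨i, mem_remRows.2 ⟨by omega, by omega⟩, ?_⟩
  have : j = P i - 1 := by omega
  rw [← this]
  exact hTc

lemma branching (n : ℕ) (P : ℕ → ℕ) (hP : IsPartitionOf (n+1) P) :
    dimSYT (n+1) P = ∑ r ∈ remRows (n+1) P, dimSYT n (remBox P r) := by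
  classical
  have key : ∀ r ∈ remRows (n+1) P,
      ({T : ℕ × ℕ → ℕ | IsSYT (n+1) P T ∧ T (r, P r - 1) = n+1}).ncard
        = dimSYT n (remBox P r) := by
    intro r hr
    rw [dimSYT]
    have himg : (fun T => Function.update T (r, P r - 1) 0)
          '' {T : ℕ × ℕ → ℕ | IsSYT (n+1) P T ∧ T (r, P r - 1) = n+1}
        = {T : ℕ × ℕ → ℕ | IsSYT n (remBox P r) T} := by
      ext T'
      simp only [Set.mem_image, Set.mem_setOf_eq]
      constructor
      · rintro ⟨T, ⟨hT, hc⟩, rfl⟩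
        exact syt_remove hP hr hT hc
      · intro hT'
        refine ⟨Function.update T' (r, P r - 1) (n+1),
          ⟨syt_insert hP hr hT', Function.update_self _ _ _⟩, ?_⟩
        rw [Function.update_idem]
        have hz : T' (r, P r - 1) = 0 :=
          hT'.1 _ (by rw [cells_remBox hP hr]; exact Finset.notMem_erase _ _)
        rw [← hz, Function.update_eq_self]
    have hinj : Set.InjOn (fun T => Function.update T (r, P r - 1) 0)
        {T : ℕ × ℕ → ℕ | IsSYT (n+1) P T ∧ T (r, P r - 1) = n+1} := by
      intro T₁ h₁ T₂ h₂ he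
      funext c
      by_cases h : c = (r, P r - 1)
      · rw [h, h₁.2, h₂.2]
      · have := congrFun he c
        simp only at this
        rwa [Function.update_of_ne h, Function.update_of_ne h] at this
    rw [← himg, Set.ncard_image_of_injOn hinj]
  have hfin := syt_finite (n+1) P
  have hSr : ∀ r : ℕ, ({T : ℕ × ℕ → ℕ | IsSYT (n+1) P T ∧ T (r, P r - 1) = n+1}).Finite :=
    fun r => hfin.subset (fun T hT => hT.1)
  have hcover : hfin.toFinset
      = (remRows (n+1) P).biUnion (fun r => (hSr r).toFinset) := by
    ext T
    simp only [Set.Finite.mem_toFinset, Finset.mem_biUnion, Set.mem_setOf_eq]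
    constructor
    · intro hT
      obtain ⟨r, hr, hc⟩ := syt_top_cell hP hT
      exact ⟨r, hr, hT, hc⟩
    · rintro ⟨r, -, hT, -⟩
      exact hT
  have hdisj : ∀ r ∈ remRows (n+1) P, ∀ s ∈ remRows (n+1) P, r ≠ s →
      Disjoint ((hSr r).toFinset) ((hSr s).toFinset) := by
    intro r hr s hs hrs
    rw [Finset.disjoint_left]
    intro T hTr hTs
    simp only [Set.Finite.mem_toFinset, Set.mem_setOf_eq] at hTr hTs
    obtain ⟨hT, hcr⟩ := hTr
    obtain ⟨-, hcs⟩ := hTs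
    have := hT.2.1.2.1 (Finset.mem_coe.2 (corner_mem_cells hP hr))
      (Finset.mem_coe.2 (corner_mem_cells hP hs)) (by rw [hcr, hcs])
    rw [Prod.mk.injEq] at this
    exact hrs this.1
  have h1 : dimSYT (n+1) P = hfin.toFinset.card :=
    Set.ncard_eq_toFinset_card _ hfin
  rw [h1, hcover, Finset.card_biUnion hdisj]
  refine Finset.sum_congr rfl ?_
  intro r hr
  rw [← key r hr, Set.ncard_eq_toFinset_card _ (hSr r)]

lemma remBox_addBox_comm {p : ℕ → ℕ} {b r : ℕ} (hbr : b ≠ r) :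
    remBox (addBox p b) r = addBox (remBox p r) b := by
  funext j
  by_cases h1 : j = b
  · subst h1
    rw [remBox_ne _ hbr, addBox_self, addBox_self, remBox_ne p hbr]
  · rw [addBox_ne _ h1]
    by_cases h2 : j = r
    · have hrb : r ≠ b := by rw [← h2]; exact h1
      rw [h2, remBox_self, remBox_self, addBox_ne p hrb]
    · rw [remBox_ne (addBox p b) h2, addBox_ne p h1, remBox_ne p h2]

lemma kerov (z z' : ℂ) : ∀ n : ℕ, ∀ p : ℕ → ℕ, IsPartitionOf n p →
    ∑ b ∈ addRows n p,
        (((p b : ℂ) - (b:ℕ) + z) * (((p b : ℂ)) - (b:ℕ) + z')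
          * (dimSYT (n+1) (addBox p b) : ℂ))
      = ((n:ℂ) + 1) * (z * z' + (n:ℂ)) * (dimSYT n p : ℂ) := by
  intro n
  induction n with
  | zero =>
    intro p hp
    have hpz : ∀ i, p i = 0 := fun i => hp.2.1 i (Nat.zero_le i)
    have h0mem : (0:ℕ) ∈ addRows 0 p := mem_addRows.2 ⟨by omega, Or.inl rfl⟩
    have ha : addRows 0 p = {0} := by
      ext i
      simp only [mem_addRows, Finset.mem_singleton, hpz]
      omega
    rw [ha, Finset.sum_singleton]
    have hq : IsPartitionOf 1 (addBox p 0) := isPartitionOf_addBox hp h0mem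
    have hrem : remRows 1 (addBox p 0) = {0} := by
      ext i
      simp only [mem_remRows, Finset.mem_singleton]
      constructor
      · rintro ⟨hi, hlt⟩
        by_contra hne
        rw [addBox_ne p hne, addBox_ne p (show i+1 ≠ 0 by omega), hpz, hpz] at hlt
        omega
      · rintro rfl
        refine ⟨by omega, ?_⟩
        rw [addBox_ne p (by omega), addBox_self, hpz, hpz]
        omega
    have hdq : dimSYT 1 (addBox p 0) = 1 := by
      rw [branching 0 (addBox p 0) hq, hrem, Finset.sum_singleton]
      exact dim_zero (isPartitionOf_remBox hq (by rw [hrem]; exact Finset.mem_singleton_self 0))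
    rw [hdq, dim_zero hp, hpz 0]
    push_cast
    ring
  | succ k ih =>
    intro p hp
    have hstep : ∀ b ∈ addRows (k+1) p,
        (dimSYT (k+2) (addBox p b) : ℂ)
          = (dimSYT (k+1) p : ℂ)
            + ∑ r ∈ (remRows (k+1) p).filter (fun r => compat p r b),
                (dimSYT (k+1) (remBox (addBox p b) r) : ℂ) := by
      intro b hb
      have hq := isPartitionOf_addBox hp hb
      have h1 := branching (k+1) (addBox p b) hq
      rw [remRows_addBox hp hb] at h1
      have hbn : b ∉ (remRows (k+1) p).filter (fun r => compat p r b) := by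
        simp [compat]
      rw [Finset.sum_insert hbn, remBox_addBox] at h1
      rw [h1]
      push_cast
      ring
    calc ∑ b ∈ addRows (k+1) p,
        (((p b : ℂ) - (b:ℕ) + z) * (((p b : ℂ)) - (b:ℕ) + z')
          * (dimSYT (k+1+1) (addBox p b) : ℂ))
        = ∑ b ∈ addRows (k+1) p,
            ((((p b : ℂ) - (b:ℕ) + z) * (((p b : ℂ)) - (b:ℕ) + z') * (dimSYT (k+1) p : ℂ))
              + ∑ r ∈ (remRows (k+1) p).filter (fun r => compat p r b),
                  (((p b : ℂ) - (b:ℕ) + z) * (((p b : ℂ)) - (b:ℕ) + z')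
                    * (dimSYT (k+1) (remBox (addBox p b) r) : ℂ))) := by
          refine Finset.sum_congr rfl fun b hb => ?_
          rw [hstep b hb, mul_add, Finset.mul_sum]
      _ = (∑ b ∈ addRows (k+1) p,
            (((p b : ℂ) - (b:ℕ) + z) * (((p b : ℂ)) - (b:ℕ) + z'))) * (dimSYT (k+1) p : ℂ)
          + ∑ b ∈ addRows (k+1) p,
              ∑ r ∈ remRows (k+1) p,
                (if compat p r b then
                  (((p b : ℂ) - (b:ℕ) + z) * (((p b : ℂ)) - (b:ℕ) + z')
                    * (dimSYT (k+1) (remBox (addBox p b) r) : ℂ)) else 0) := by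
          rw [Finset.sum_add_distrib, ← Finset.sum_mul]
          congr 1
          exact Finset.sum_congr rfl fun b hb => (Finset.sum_filter _ _)
      _ = (∑ b ∈ addRows (k+1) p,
            (((p b : ℂ) - (b:ℕ) + z) * (((p b : ℂ)) - (b:ℕ) + z'))) * (dimSYT (k+1) p : ℂ)
          + ∑ r ∈ remRows (k+1) p,
              ∑ b ∈ (addRows (k+1) p).filter (fun b => compat p r b),
                (((p b : ℂ) - (b:ℕ) + z) * (((p b : ℂ)) - (b:ℕ) + z')
                  * (dimSYT (k+1) (remBox (addBox p b) r) : ℂ)) := by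
          congr 1
          rw [Finset.sum_comm]
          exact Finset.sum_congr rfl fun r hr => (Finset.sum_filter _ _).symm
      _ = ((k:ℂ) + 1 + 1) * (z * z' + ((k:ℂ) + 1)) * (dimSYT (k+1) p : ℂ) := by
          have hper : ∀ r ∈ remRows (k+1) p,
              ∑ b ∈ (addRows (k+1) p).filter (fun b => compat p r b),
                (((p b : ℂ) - (b:ℕ) + z) * (((p b : ℂ)) - (b:ℕ) + z')
                  * (dimSYT (k+1) (remBox (addBox p b) r) : ℂ))
              = ((k:ℂ) + 1) * (z * z' + (k:ℂ)) * (dimSYT k (remBox p r) : ℂ)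
                - (((p r : ℂ) - 1 - (r:ℕ) + z) * ((p r : ℂ) - 1 - (r:ℕ) + z'))
                    * (dimSYT (k+1) p : ℂ) := by
            intro r hr
            have hrpos : 0 < p r := by
              obtain ⟨-, h⟩ := mem_remRows.1 hr; omega
            have hmu := isPartitionOf_remBox hp hr
            have hfe : (addRows (k+1) p).filter (fun b => compat p r b)
                = (addRows k (remBox p r)).erase r := by
              rw [addRows_remBox hp hr, Finset.erase_insert (by simp [compat])]
            rw [hfe]
            have hcong : ∀ b ∈ (addRows k (remBox p r)).erase r,
                (((p b : ℂ) - (b:ℕ) + z) * (((p b : ℂ)) - (b:ℕ) + z')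
                  * (dimSYT (k+1) (remBox (addBox p b) r) : ℂ))
                = (((remBox p r b : ℂ)) - (b:ℕ) + z) * (((remBox p r b : ℂ)) - (b:ℕ) + z')
                  * (dimSYT (k+1) (addBox (remBox p r) b) : ℂ) := by
              intro b hb
              have hbne : b ≠ r := (Finset.mem_erase.1 hb).1
              rw [remBox_addBox_comm hbne, remBox_ne p hbne]
            rw [Finset.sum_congr rfl hcong]
            have hsplit := Finset.add_sum_erase (addRows k (remBox p r))
              (fun b => (((remBox p r b : ℂ)) - (b:ℕ) + z) * (((remBox p r b : ℂ)) - (b:ℕ) + z')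
                  * (dimSYT (k+1) (addBox (remBox p r) b) : ℂ))
              (r_mem_addRows hp hr)
            have hIH := ih (remBox p r) hmu
            have hfr : (((remBox p r r : ℂ)) - (r:ℕ) + z) * (((remBox p r r : ℂ)) - (r:ℕ) + z')
                  * (dimSYT (k+1) (addBox (remBox p r) r) : ℂ)
                = (((p r : ℂ) - 1 - (r:ℕ) + z) * ((p r : ℂ) - 1 - (r:ℕ) + z'))
                    * (dimSYT (k+1) p : ℂ) := by
              rw [addBox_remBox hrpos, remBox_self, Nat.cast_sub hrpos, Nat.cast_one]
              try ring
            beta_reduce at hsplit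
            rw [hfr] at hsplit
            rw [hIH] at hsplit
            linear_combination hsplit
          rw [Finset.sum_congr rfl hper, Finset.sum_sub_distrib]
          have hbr : ((dimSYT (k+1) p : ℕ) : ℂ)
              = ∑ r ∈ remRows (k+1) p, ((dimSYT k (remBox p r) : ℕ) : ℂ) := by
            rw [← Nat.cast_sum, branching k p hp]
          have hw := sum_w z z' hp
          rw [← Finset.sum_mul, ← Finset.mul_sum, ← hbr, hw]
          push_cast
          ring
      _ = ((((k+1):ℕ):ℂ) + 1) * (z * z' + (((k+1):ℕ):ℂ)) * (dimSYT (k+1) p : ℂ) := by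
          push_cast
          ring

lemma part_finite (n : ℕ) : {q : ℕ → ℕ | IsPartitionOf n q}.Finite := by
  classical
  have hinj : Set.InjOn (fun (q : ℕ → ℕ) => (fun i : Fin n => (⟨min (q i) n, by omega⟩ : Fin (n+1))))
      {q : ℕ → ℕ | IsPartitionOf n q} := by
    intro q₁ h₁ q₂ h₂ he
    funext i
    rcases Nat.lt_or_ge i n with hi | hi
    · have := congrFun he ⟨i, hi⟩
      simp only [Fin.mk.injEq] at this
      have e₁ := part_le h₁ i
      have e₂ := part_le h₂ i
      omega
    · rw [h₁.2.1 i hi, h₂.2.1 i hi]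
  exact Set.Finite.of_finite_image (Set.toFinite _) hinj

lemma main_sum (z z' : ℂ) : ∀ n : ℕ,
    ∑ p ∈ (part_finite n).toFinset,
      ((∏ b ∈ cells n p, (((b.2 : ℂ) - b.1 + z) * ((b.2 : ℂ) - b.1 + z')))
        * (dimSYT n p : ℂ)^2)
      = (∏ k ∈ Finset.range n, (z*z' + k)) * (n.factorial : ℂ) := by
  intro n
  induction n with
  | zero =>
    have hz : IsPartitionOf 0 (fun _ => 0) := ⟨antitone_const, fun i _ => rfl, by simp⟩
    have hset : (part_finite 0).toFinset = {fun _ => 0} := by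
      ext q
      simp only [Set.Finite.mem_toFinset, Set.mem_setOf_eq, Finset.mem_singleton]
      constructor
      · intro hq; funext i; exact hq.2.1 i (Nat.zero_le i)
      · rintro rfl; exact hz
    rw [hset, Finset.sum_singleton]
    have hcells : cells 0 (fun _ => 0) = (∅ : Finset (ℕ×ℕ)) := by
      ext c; simp [mem_cells]
    rw [hcells, dim_zero hz]
    simp
  | succ n ih =>
    have hcast : ∀ P ∈ (part_finite (n+1)).toFinset,
        ((∏ b ∈ cells (n+1) P, (((b.2 : ℂ) - b.1 + z) * ((b.2 : ℂ) - b.1 + z')))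
          * (dimSYT (n+1) P : ℂ)^2)
        = ∑ r ∈ remRows (n+1) P,
            ((∏ b ∈ cells (n+1) P, (((b.2 : ℂ) - b.1 + z) * ((b.2 : ℂ) - b.1 + z')))
              * (dimSYT (n+1) P : ℂ) * (dimSYT n (remBox P r) : ℂ)) := by
      intro P hP
      have hPp : IsPartitionOf (n+1) P := (Set.Finite.mem_toFinset (part_finite (n+1))).1 hP
      have hd : ((dimSYT (n+1) P : ℕ):ℂ)
          = ∑ r ∈ remRows (n+1) P, ((dimSYT n (remBox P r) : ℕ):ℂ) := by
        rw [← Nat.cast_sum, branching n P hPp]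
      have h2 : ∑ r ∈ remRows (n+1) P,
            ((∏ b ∈ cells (n+1) P, (((b.2 : ℂ) - b.1 + z) * ((b.2 : ℂ) - b.1 + z')))
              * (dimSYT (n+1) P : ℂ) * (dimSYT n (remBox P r) : ℂ))
          = ((∏ b ∈ cells (n+1) P, (((b.2 : ℂ) - b.1 + z) * ((b.2 : ℂ) - b.1 + z')))
              * (dimSYT (n+1) P : ℂ)^2) := by
        rw [← Finset.mul_sum, ← hd, pow_two, mul_assoc]
      exact h2.symm
    rw [Finset.sum_congr rfl hcast, Finset.sum_sigma']
    have hre : ∑ x ∈ ((part_finite (n+1)).toFinset).sigma (fun P => remRows (n+1) P),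
        ((∏ b ∈ cells (n+1) x.1, (((b.2 : ℂ) - b.1 + z) * ((b.2 : ℂ) - b.1 + z')))
          * (dimSYT (n+1) x.1 : ℂ) * (dimSYT n (remBox x.1 x.2) : ℂ))
        = ∑ y ∈ ((part_finite n).toFinset).sigma (fun p => addRows n p),
        ((∏ b ∈ cells (n+1) (addBox y.1 y.2), (((b.2 : ℂ) - b.1 + z) * ((b.2 : ℂ) - b.1 + z')))
          * (dimSYT (n+1) (addBox y.1 y.2) : ℂ) * (dimSYT n y.1 : ℂ)) := by
      refine Finset.sum_nbij' (fun x => ⟨remBox x.1 x.2, x.2⟩) (fun y => ⟨addBox y.1 y.2, y.2⟩)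
        ?_ ?_ ?_ ?_ ?_
      · rintro ⟨P, r⟩ hx
        rw [Finset.mem_sigma] at hx ⊢
        obtain ⟨hP, hr⟩ := hx
        dsimp only at hr
        have hPp : IsPartitionOf (n+1) P := (Set.Finite.mem_toFinset (part_finite (n+1))).1 hP
        exact ⟨(Set.Finite.mem_toFinset (part_finite n)).2 (isPartitionOf_remBox hPp hr), r_mem_addRows hPp hr⟩
      · rintro ⟨p, b⟩ hy
        rw [Finset.mem_sigma] at hy ⊢
        obtain ⟨hp, hb⟩ := hy
        have hpp : IsPartitionOf n p := (Set.Finite.mem_toFinset (part_finite n)).1 hp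
        exact ⟨(Set.Finite.mem_toFinset (part_finite (n+1))).2 (isPartitionOf_addBox hpp hb), b_mem_remRows hpp hb⟩
      · rintro ⟨P, r⟩ hx
        rw [Finset.mem_sigma] at hx
        obtain ⟨hP, hr⟩ := hx
        dsimp only at hr
        have hPp : IsPartitionOf (n+1) P := (Set.Finite.mem_toFinset (part_finite (n+1))).1 hP
        have hrpos : 0 < P r := by obtain ⟨-, h⟩ := mem_remRows.1 hr; omega
        simp only
        rw [addBox_remBox hrpos]
      · rintro ⟨p, b⟩ hy
        simp only
        rw [remBox_addBox]
      · rintro ⟨P, r⟩ hx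
        rw [Finset.mem_sigma] at hx
        obtain ⟨hP, hr⟩ := hx
        dsimp only at hr
        have hPp : IsPartitionOf (n+1) P := (Set.Finite.mem_toFinset (part_finite (n+1))).1 hP
        have hrpos : 0 < P r := by obtain ⟨-, h⟩ := mem_remRows.1 hr; omega
        simp only
        rw [addBox_remBox hrpos]
    rw [hre, Finset.sum_sigma]
    dsimp only
    have hper : ∀ p ∈ (part_finite n).toFinset,
        ∑ b ∈ addRows n p,
          ((∏ c ∈ cells (n+1) (addBox p b), (((c.2 : ℂ) - c.1 + z) * ((c.2 : ℂ) - c.1 + z')))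
            * (dimSYT (n+1) (addBox p b) : ℂ) * (dimSYT n p : ℂ))
        = ((n:ℂ)+1) * (z*z' + (n:ℂ)) *
            ((∏ c ∈ cells n p, (((c.2 : ℂ) - c.1 + z) * ((c.2 : ℂ) - c.1 + z')))
              * (dimSYT n p : ℂ)^2) := by
      intro p hp
      have hpp : IsPartitionOf n p := (Set.Finite.mem_toFinset (part_finite n)).1 hp
      have h1 : ∀ b ∈ addRows n p,
          ((∏ c ∈ cells (n+1) (addBox p b), (((c.2 : ℂ) - c.1 + z) * ((c.2 : ℂ) - c.1 + z')))
            * (dimSYT (n+1) (addBox p b) : ℂ) * (dimSYT n p : ℂ))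
          = ((∏ c ∈ cells n p, (((c.2 : ℂ) - c.1 + z) * ((c.2 : ℂ) - c.1 + z')))
              * (dimSYT n p : ℂ))
            * (((p b : ℂ) - (b:ℕ) + z) * (((p b : ℂ)) - (b:ℕ) + z')
                * (dimSYT (n+1) (addBox p b) : ℂ)) := by
        intro b hb
        rw [cells_addBox hpp hb, Finset.prod_insert newcell_not_mem]
        ring
      rw [Finset.sum_congr rfl h1, ← Finset.mul_sum, kerov z z' n p hpp]
      ring
    rw [Finset.sum_congr rfl hper, ← Finset.mul_sum, ih]
    rw [Finset.prod_range_succ, Nat.factorial_succ]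
    push_cast
    ring

lemma poch_eval (x : ℂ) (n : ℕ) : (ascPochhammer ℂ n).eval x = ∏ k ∈ Finset.range n, (x + k) := by
  induction n with
  | zero => simp
  | succ m ihm => rw [ascPochhammer_succ_eval, ihm, Finset.prod_range_succ]


/-- The `n`-th level z-measure is a probability distribution on partitions of `n`:
`∑_{λ ⊢ n} (∏_{b∈λ} (c(b)+z)(c(b)+z̄)) / (zz̄)_n · (dim λ)² / n! = 1`
for `z` a non-integral complex number and `z' = conj z`. -/
theorem zMeasure_sums_to_one (z : ℂ) (hz : ∀ m : ℤ, z ≠ m) (n : ℕ) :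
    ∑ᶠ p ∈ {q : ℕ → ℕ | IsPartitionOf n q},
      (∏ b ∈ cells n p, (((b.2 : ℂ) - b.1 + z) * ((b.2 : ℂ) - b.1 + starRingEnd ℂ z))) /
          (ascPochhammer ℂ n).eval (z * starRingEnd ℂ z) *
        ((dimSYT n p : ℂ) ^ 2 / (n.factorial : ℂ)) = 1 := by
  classical
  have hS := part_finite n
  rw [show {q : ℕ → ℕ | IsPartitionOf n q} = ↑hS.toFinset from (Set.Finite.coe_toFinset hS).symm,
    finsum_mem_coe_finset]
  set z' := starRingEnd ℂ z with hz'
  have hz0 : z ≠ 0 := by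
    intro h
    exact hz 0 (by rw [h]; simp)
  have hzz : z * z' = ((Complex.normSq z : ℝ) : ℂ) := by
    rw [hz']; exact Complex.mul_conj z
  have hne : (∏ k ∈ Finset.range n, (z * z' + k)) ≠ 0 := by
    rw [Finset.prod_ne_zero_iff]
    intro k hk
    have hpos : 0 < Complex.normSq z := Complex.normSq_pos.2 hz0
    have h2 : ((Complex.normSq z + (k:ℝ) : ℝ) : ℂ) ≠ 0 :=
      Complex.ofReal_ne_zero.2 (by positivity)
    push_cast at h2
    rw [hzz]
    exact h2
  have hfact : ((n.factorial : ℕ):ℂ) ≠ 0 := Nat.cast_ne_zero.2 (Nat.factorial_ne_zero n)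
  have hmain := main_sum z z' n
  calc ∑ p ∈ hS.toFinset,
      ((∏ b ∈ cells n p, (((b.2 : ℂ) - b.1 + z) * ((b.2 : ℂ) - b.1 + z'))) /
          (ascPochhammer ℂ n).eval (z * z') *
        ((dimSYT n p : ℂ) ^ 2 / (n.factorial : ℂ)))
      = ∑ p ∈ hS.toFinset,
        (((∏ b ∈ cells n p, (((b.2 : ℂ) - b.1 + z) * ((b.2 : ℂ) - b.1 + z')))
            * (dimSYT n p : ℂ)^2)
          / ((∏ k ∈ Finset.range n, (z*z' + k)) * (n.factorial : ℂ))) := by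
        refine Finset.sum_congr rfl fun p hp => ?_
        rw [poch_eval, div_mul_div_comm]
      _ = (∑ p ∈ hS.toFinset,
            ((∏ b ∈ cells n p, (((b.2 : ℂ) - b.1 + z) * ((b.2 : ℂ) - b.1 + z')))
              * (dimSYT n p : ℂ)^2))
          / ((∏ k ∈ Finset.range n, (z*z' + k)) * (n.factorial : ℂ)) := by
        rw [Finset.sum_div]
      _ = 1 := by
        rw [hmain]
        exact div_self (mul_ne_zero hne hfact)
end

section
/- Under the RSK correspondence for permutations, the length of the longest increasing subsequence of a permutation σ ∈ S_n equals λ_1, the length of the first row of the common shape λ of the pair of standard Young tableaux associated to σ. -/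
/-- Schensted row insertion of `x` into a tableau given as a list of rows:
`x` replaces the first strictly larger entry of the first row, which is then
inserted into the remaining rows; if no entry is larger, `x` is appended. -/
def rowInsert : List (List ℕ) → ℕ → List (List ℕ)
  | [], x => [[x]]
  | r :: rest, x =>
    match r.findIdx? (fun a => decide (x < a)) with
    | none => (r ++ [x]) :: rest
    | some i => r.set i x :: rowInsert rest (r.getD i 0)

/-- The insertion tableau of a word: successive Schensted row insertions, starting
from the empty tableau. -/
def insertionTableau (w : List ℕ) : List (List ℕ) :=
  w.foldl rowInsert []

namespace SchT
open List

def ins (r : List ℕ) (x : ℕ) : List ℕ :=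
  match r.findIdx? (fun a => decide (x < a)) with
  | none => r ++ [x]
  | some i => r.set i x

theorem length_le_length_ins (r : List ℕ) (x : ℕ) : r.length ≤ (ins r x).length := by
  unfold ins
  cases h : r.findIdx? (fun a => decide (x < a)) <;> simp

theorem ins_getElem_le (r : List ℕ) (x : ℕ) (j : ℕ) (hj : j < r.length)
    (hj' : j < (ins r x).length) : (ins r x)[j] ≤ r[j] := by
  revert hj'
  unfold ins
  cases h : r.findIdx? (fun a => decide (x < a)) with
  | none => intro hj'; simp [List.getElem_append_left hj]
  | some i =>
    intro hj'
    rw [List.findIdx?_eq_some_iff_getElem] at h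
    obtain ⟨hi, hp, hmin⟩ := h
    rcases eq_or_ne j i with rfl | hne
    · simp only [List.getElem_set_self]
      exact le_of_lt (by simpa using hp)
    · simp [List.getElem_set_ne hne.symm]

theorem sorted_ins {r : List ℕ} (hr : r.Pairwise (· ≤ ·)) (x : ℕ) :
    (ins r x).Pairwise (· ≤ ·) := by
  unfold ins
  cases h : r.findIdx? (fun a => decide (x < a)) with
  | none =>
    rw [List.findIdx?_eq_none_iff] at h
    rw [pairwise_append]
    refine ⟨hr, by simp, ?_⟩
    intro a ha b hb
    simp only [mem_singleton] at hb
    subst hb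
    have := h a ha
    simpa using le_of_not_gt (by simpa using this)
  | some i =>
    dsimp only
    rw [List.findIdx?_eq_some_iff_getElem] at h
    obtain ⟨hi, hp, hmin⟩ := h
    have hx : x < r[i] := by simpa using hp
    rw [pairwise_iff_getElem] at hr ⊢
    intro a b ha hb hab
    have ha' : a < r.length := by simpa using ha
    have hb' : b < r.length := by simpa using hb
    rcases eq_or_ne a i with rfl | hna
    · rw [List.getElem_set_self, List.getElem_set_ne (by omega : a ≠ b)]
      exact le_of_lt (lt_of_lt_of_le hx ((hr a b ha' hb' hab)))
    · rcases eq_or_ne b i with rfl | hnb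
      · rw [List.getElem_set_self, List.getElem_set_ne (by omega : b ≠ a)]
        have := hmin a (by omega)
        exact le_of_not_gt (by simpa using this)
      · rw [List.getElem_set_ne (by omega : i ≠ a), List.getElem_set_ne (by omega : i ≠ b)]
        exact hr a b ha' hb' hab

/-- Key step lemma: if the first `k` entries of `r` are `≤ x`, then after inserting `x`
the row has length `> k` and its entry at position `k` is `≤ x`. -/
theorem ins_key (r : List ℕ) (x k : ℕ) (hk : k ≤ r.length)
    (hbelow : ∀ j (hj : j < k), r[j]'(lt_of_lt_of_le hj hk) ≤ x) :
    ∃ h : k < (ins r x).length, (ins r x)[k] ≤ x := by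
  unfold ins
  cases h : r.findIdx? (fun a => decide (x < a)) with
  | none =>
    dsimp only
    rw [List.findIdx?_eq_none_iff] at h
    have hlen : k < (r ++ [x]).length := by simp; omega
    refine ⟨hlen, ?_⟩
    rcases eq_or_lt_of_le hk with rfl | hk'
    · rw [List.getElem_append_right (le_refl _)]
      simp
    · rw [List.getElem_append_left hk']
      have := h r[k] (List.getElem_mem _)
      exact le_of_not_gt (by simpa using this)
  | some i =>
    dsimp only
    rw [List.findIdx?_eq_some_iff_getElem] at h
    obtain ⟨hi, hp, hmin⟩ := h
    have hki : k ≤ i := by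
      by_contra hc
      push_neg at hc
      exact absurd (by simpa using hp) (not_lt_of_ge (hbelow i hc))
    have hlen : k < (r.set i x).length := by simp; omega
    refine ⟨hlen, ?_⟩
    rcases eq_or_lt_of_le hki with rfl | hki'
    · simp
    · rw [List.getElem_set_ne (by omega : i ≠ k)]
      have := hmin k hki'
      exact le_of_not_gt (by simpa using this)

def row (w : List ℕ) : List ℕ := w.foldl ins []

theorem row_concat (w : List ℕ) (x : ℕ) : row (w ++ [x]) = ins (row w) x := by
  simp [row]

theorem row_sorted (w : List ℕ) : (row w).Pairwise (· ≤ ·) := by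
  induction w using List.reverseRecOn with
  | nil => simp [row]
  | append_singleton w x ih => rw [row_concat]; exact sorted_ins ih x

/-- Lower bound: any weakly increasing sublist `l ++ [v]` of `w` forces the row to
have length `> l.length` with entry at `l.length` being `≤ v`. -/
theorem row_lower (w : List ℕ) : ∀ l v, (l ++ [v]) <+ w → (l ++ [v]).Pairwise (· ≤ ·) →
    ∃ h : l.length < (row w).length, (row w)[l.length] ≤ v := by
  induction w using List.reverseRecOn with
  | nil =>
    intro l v hsub _
    have := hsub.length_le
    simp at this
  | append_singleton w x ih =>
    intro l v hsub hsort
    rw [row_concat]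
    rw [List.sublist_append_iff] at hsub
    obtain ⟨l₁, l₂, heq, h1, h2⟩ := hsub
    have hl₂ : l₂ = [] ∨ l₂ = [x] := by
      cases l₂ with
      | nil => left; rfl
      | cons a t =>
        right
        have := h2.length_le
        simp at this
        obtain ⟨ha, ht⟩ : a = x ∧ t = [] := by
          cases t with
          | nil =>
            have : a ∈ [x] := h2.subset (by simp)
            simp at this; exact ⟨this, rfl⟩
          | cons b u => simp at this
        subst ha; subst ht; rfl
    rcases hl₂ with rfl | rfl
    · -- l ++ [v] <+ w
      rw [List.append_nil] at heq
      subst heq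
      obtain ⟨h0, hle⟩ := ih l v h1 hsort
      have h0' : l.length < (ins (row w) x).length :=
        lt_of_lt_of_le h0 (length_le_length_ins _ _)
      exact ⟨h0', le_trans (ins_getElem_le _ _ _ h0 h0') hle⟩
    · -- v = x, l = l₁ <+ w
      obtain ⟨rfl, hv⟩ := List.append_inj' heq rfl
      have hv : v = x := by simpa using hv
      subst hv
      have hall : ∀ a ∈ l, a ≤ v := by
        rw [List.pairwise_append] at hsort
        intro a ha
        exact hsort.2.2 a ha v (by simp)
      rcases List.eq_nil_or_concat l with rfl | ⟨l₀, v₀, rfl⟩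
      · exact ins_key (row w) v 0 (Nat.zero_le _) (by omega)
      · rw [List.concat_eq_append] at h1 hall ⊢
        have hsub₀ : (l₀ ++ [v₀]) <+ w := h1
        have hsort₀ : (l₀ ++ [v₀]).Pairwise (· ≤ ·) :=
          hsort.sublist (by rw [List.concat_eq_append]; exact List.sublist_append_left _ _)
        obtain ⟨h0, hle⟩ := ih l₀ v₀ hsub₀ hsort₀
        have hv₀ : v₀ ≤ v := hall v₀ (by simp)
        have hr := row_sorted w
        rw [pairwise_iff_getElem] at hr
        simp only [List.length_append, List.length_singleton]
        refine ins_key (row w) v (l₀.length + 1) (by omega) ?_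
        intro j hj
        rcases eq_or_lt_of_le (Nat.lt_succ_iff.mp hj) with rfl | hj'
        · exact le_trans hle hv₀
        · exact le_trans (le_trans (hr j l₀.length (by omega) h0 hj') hle) hv₀

theorem extend_step {w l₀ : List ℕ} {u x : ℕ} (hsub : (l₀ ++ [u]) <+ w)
    (hsort : (l₀ ++ [u]).Pairwise (· ≤ ·)) (hux : u ≤ x) :
    ((l₀ ++ [u]) ++ [x]) <+ w ++ [x] ∧ ((l₀ ++ [u]) ++ [x]).Pairwise (· ≤ ·) := by
  refine ⟨hsub.append (Sublist.refl _), ?_⟩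
  rw [List.pairwise_append]
  refine ⟨hsort, by simp, ?_⟩
  intro a ha b hb
  simp only [mem_singleton] at hb
  subst hb
  rw [List.pairwise_append] at hsort
  rcases List.mem_append.mp ha with ha' | ha'
  · exact le_trans (hsort.2.2 a ha' u (by simp)) hux
  · simp only [mem_singleton] at ha'
    subst ha'
    exact hux

/-- Upper bound: the entry at position `j` of the row is the last value of a weakly
increasing sublist of `w` of length `j + 1`. -/
theorem row_upper (w : List ℕ) : ∀ j v, (row w)[j]? = some v →
    ∃ l, l.length = j ∧ (l ++ [v]) <+ w ∧ (l ++ [v]).Pairwise (· ≤ ·) := by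
  induction w using List.reverseRecOn with
  | nil => intro j v hv; simp [row] at hv
  | append_singleton w x ih =>
    intro j v hv
    rw [row_concat] at hv
    revert hv
    unfold ins
    cases h : (row w).findIdx? (fun a => decide (x < a)) with
    | none =>
      dsimp only
      rw [List.findIdx?_eq_none_iff] at h
      intro hv
      rcases lt_or_ge j (row w).length with hj | hj
      · rw [List.getElem?_append_left hj] at hv
        obtain ⟨l, hlen, hsub, hsort⟩ := ih j v hv
        exact ⟨l, hlen, hsub.trans (List.sublist_append_left _ _), hsort⟩
      · -- j = (row w).length, v = x
        have hlt : j < (row w).length + 1 := by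
          have := (List.getElem?_eq_some_iff.mp hv).1
          simpa using this
        have hj' : j = (row w).length := by omega
        subst hj'
        rw [List.getElem?_concat_length] at hv
        have hxv : x = v := by simpa using hv
        rw [← hxv]
        rcases List.eq_nil_or_concat' (row w) with hnil | ⟨r₀, u, hr⟩
        · exact ⟨[], by simp [hnil],
            by simpa using (List.nil_sublist w).append (Sublist.refl [x]), by simp⟩
        · have hu : (row w)[r₀.length]? = some u := by rw [hr]; exact List.getElem?_concat_length
          obtain ⟨l₀, hlen₀, hsub₀, hsort₀⟩ := ih r₀.length u hu
          have hux : u ≤ x := by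
            have : u ∈ row w := by rw [hr]; simp
            exact le_of_not_gt (by simpa using h u this)
          obtain ⟨hs1, hs2⟩ := extend_step hsub₀ hsort₀ hux
          refine ⟨l₀ ++ [u], ?_, hs1, hs2⟩
          simp [hlen₀, hr]
    | some i =>
      dsimp only
      intro hv
      have h' := h
      rw [List.findIdx?_eq_some_iff_getElem] at h'
      obtain ⟨hi, hp, hmin⟩ := h'
      rcases eq_or_ne j i with rfl | hne
      · rw [List.getElem?_set_self hi] at hv
        have hxv : x = v := by simpa using hv
        rw [← hxv]
        rcases Nat.eq_zero_or_eq_succ_pred j with hj0 | hjm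
        · subst hj0
          exact ⟨[], rfl, by simpa using (List.nil_sublist w).append (Sublist.refl [x]),
            by simp⟩
        · obtain ⟨m, rfl⟩ : ∃ m, j = m + 1 := ⟨j - 1, hjm⟩
          have hm : m < (row w).length := by omega
          have hu : (row w)[m]? = some ((row w)[m]) := List.getElem?_eq_getElem hm
          obtain ⟨l₀, hlen₀, hsub₀, hsort₀⟩ := ih m _ hu
          have hux : (row w)[m] ≤ x := le_of_not_gt (by simpa using hmin m (by omega))
          obtain ⟨hs1, hs2⟩ := extend_step hsub₀ hsort₀ hux
          exact ⟨l₀ ++ [(row w)[m]], by simp [hlen₀], hs1, hs2⟩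
      · rw [List.getElem?_set_ne hne.symm] at hv
        obtain ⟨l, hlen, hsub, hsort⟩ := ih j v hv
        exact ⟨l, hlen, hsub.trans (List.sublist_append_left _ _), hsort⟩

theorem headD_rowInsert (t : List (List ℕ)) (x : ℕ) :
    (rowInsert t x).headD [] = ins (t.headD []) x := by
  cases t with
  | nil => rfl
  | cons r rest =>
    cases h : r.findIdx? (fun a => decide (x < a)) with
    | none => simp [rowInsert, ins, h]
    | some i => simp [rowInsert, ins, h]

theorem headD_insertionTableau (w : List ℕ) :
    (insertionTableau w).headD [] = row w := by
  suffices h : ∀ t : List (List ℕ), ((w.foldl rowInsert t).headD []) = w.foldl ins (t.headD []) by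
    simpa [insertionTableau, row] using h []
  induction w with
  | nil => intro t; rfl
  | cons x w ihw => intro t; rw [List.foldl_cons, List.foldl_cons, ihw, headD_rowInsert]

/-- A strictly sorted sublist of `List.ofFn f` yields an "increasing" index set. -/
theorem sublist_to_finset {n : ℕ} (f : Fin n → ℕ) (l : List ℕ)
    (hsub : l <+ List.ofFn f) (hsort : l.Pairwise (· < ·)) :
    ∃ s : Finset (Fin n), s.card = l.length ∧
      ∀ i ∈ s, ∀ j ∈ s, i < j → f i < f j := by
  obtain ⟨g, hg⟩ := List.sublist_iff_exists_fin_orderEmbedding_get_eq.mp hsub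
  have hlen : (List.ofFn f).length = n := List.length_ofFn
  set emb : Fin l.length → Fin n := fun ix => Fin.cast hlen (g ix) with hemb
  have hinj : Function.Injective emb := fun a b hab => by
    apply g.injective
    apply Fin.val_injective
    simpa [hemb] using congrArg Fin.val hab
  refine ⟨Finset.image emb Finset.univ, ?_, ?_⟩
  · rw [Finset.card_image_of_injective _ hinj]
    simp
  · intro i hi j hj hij
    simp only [Finset.mem_image, Finset.mem_univ, true_and] at hi hj
    obtain ⟨a, rfl⟩ := hi
    obtain ⟨b, rfl⟩ := hj
    have hab : a < b := by
      have : (g a : ℕ) < (g b : ℕ) := hij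
      exact g.lt_iff_lt.mp (by exact_mod_cast this)
    have hval : ∀ c : Fin l.length, f (emb c) = l.get c := by
      intro c
      rw [hg c, List.get_ofFn]
    rw [hval a, hval b]
    exact hsort.rel_get_of_lt hab

/-- An "increasing" index set yields a weakly sorted sublist of `List.ofFn f`. -/
theorem finset_to_sublist {n : ℕ} (f : Fin n → ℕ) (s : Finset (Fin n))
    (hmono : ∀ i ∈ s, ∀ j ∈ s, i < j → f i < f j) :
    ∃ l : List ℕ, l.length = s.card ∧ l <+ List.ofFn f ∧ l.Pairwise (· ≤ ·) := by
  classical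
  set t : List (Fin n) := s.sort (· ≤ ·) with ht
  have htsort : t.Pairwise (· < ·) := s.sortedLT_sort.pairwise
  have hlen : (List.ofFn f).length = n := List.length_ofFn
  refine ⟨t.map f, by simp [ht, Finset.length_sort], ?_, ?_⟩
  · rw [List.sublist_iff_exists_fin_orderEmbedding_get_eq]
    have hll : (t.map f).length = t.length := List.length_map _
    have hmonot : StrictMono (fun ix : Fin (t.map f).length =>
        Fin.cast hlen.symm (t.get (Fin.cast hll ix))) := by
      intro a b hab
      dsimp only
      have hab' : Fin.cast hll a < Fin.cast hll b := by
        rw [Fin.lt_def] at hab ⊢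
        exact hab
      have h2 := htsort.rel_get_of_lt hab'
      rw [Fin.lt_def]
      simp only [Fin.coe_cast]
      exact h2
    refine ⟨OrderEmbedding.ofStrictMono _ hmonot, ?_⟩
    intro ix
    rw [List.get_ofFn]
    simp only [OrderEmbedding.coe_ofStrictMono]
    simp only [List.get_eq_getElem, List.getElem_map]
    rfl
  · rw [List.pairwise_map]
    refine htsort.imp_of_mem ?_
    intro a b ha hb hab
    exact le_of_lt (hmono a (Finset.mem_sort (· ≤ ·) |>.mp ha) b (Finset.mem_sort (· ≤ ·) |>.mp hb) hab)

end SchT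

/-- Schensted's theorem: under the RSK correspondence, the length of the first row of the
shape associated to a permutation `σ ∈ S_n` equals the length of the longest increasing
subsequence of `σ`. -/
theorem rsk_first_row_eq_longest_increasing_subsequence
    (n : ℕ) (hn : 0 < n) (σ : Equiv.Perm (Fin n)) :
    ((insertionTableau (List.ofFn fun i => (σ i : ℕ))).headD []).length =
      sSup {m | ∃ s : Finset (Fin n), s.card = m ∧
        ∀ i ∈ s, ∀ j ∈ s, i < j → σ i < σ j} := by
  set f : Fin n → ℕ := fun i => (σ i : ℕ) with hf
  rw [SchT.headD_insertionTableau]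
  set w : List ℕ := List.ofFn f with hw
  set L : ℕ := (SchT.row w).length with hL
  have hwnodup : w.Nodup := by
    rw [hw, List.nodup_ofFn]
    intro a b hab
    exact σ.injective (Fin.val_injective hab)
  have hub : ∀ m ∈ {m | ∃ s : Finset (Fin n), s.card = m ∧
      ∀ i ∈ s, ∀ j ∈ s, i < j → σ i < σ j}, m ≤ L := by
    rintro m ⟨s, hcard, hmono⟩
    have hmono' : ∀ i ∈ s, ∀ j ∈ s, i < j → f i < f j := by
      intro i hi j hj hij
      exact Fin.lt_def.mp (hmono i hi j hj hij)
    obtain ⟨l, hlen, hsub, hsort⟩ := SchT.finset_to_sublist f s hmono'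
    rcases List.eq_nil_or_concat' l with rfl | ⟨l₀, v, rfl⟩
    · simp at hlen
      omega
    · obtain ⟨h0, -⟩ := SchT.row_lower w l₀ v hsub hsort
      simp only [List.length_append, List.length_singleton] at hlen
      omega
  have hmem : L ∈ {m | ∃ s : Finset (Fin n), s.card = m ∧
      ∀ i ∈ s, ∀ j ∈ s, i < j → σ i < σ j} := by
    have hpos : 0 < L := by
      have hmem0 : f ⟨0, hn⟩ ∈ w := by
        rw [hw]
        exact (List.mem_ofFn).mpr ⟨⟨0, hn⟩, rfl⟩
      obtain ⟨h0, -⟩ := SchT.row_lower w [] (f ⟨0, hn⟩)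
        (by simpa using List.singleton_sublist.mpr hmem0) (by simp)
      simpa using h0
    have hv : (SchT.row w)[L - 1]? = some ((SchT.row w)[L - 1]'(by omega)) :=
      List.getElem?_eq_getElem (by omega)
    obtain ⟨l, hlen, hsub, hsort⟩ := SchT.row_upper w (L - 1) _ hv
    set u : List ℕ := l ++ [(SchT.row w)[L - 1]'(by omega)] with hu
    have hulen : u.length = L := by
      rw [hu]
      simp [hlen]
      omega
    have hund : u.Nodup := hsub.nodup hwnodup
    have hsort' : u.Pairwise (· < ·) := by
      exact (hsort.and hund).imp (fun h => lt_of_le_of_ne h.1 h.2)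
    obtain ⟨s, hcard, hmono⟩ := SchT.sublist_to_finset f u hsub hsort'
    refine ⟨s, by rw [hcard, hulen], ?_⟩
    intro i hi j hj hij
    exact Fin.lt_def.mpr (hmono i hi j hj hij)
  exact (IsGreatest.csSup_eq ⟨hmem, hub⟩).symm
end
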